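/- arXiv:1803.09119 — 2 statements merged into one kernel-verified Lean document; each statement's English description precedes it below -/
import Mathlib

section
/- Let Φ₀ ~ N(0,1) and Ξ₀² ~ χ²(N) be independent, and define Φ₁ conditionally on (Φ₀, Ξ₀²) = (φ₀, ξ₀²) to be normal with mean m(φ₀,ξ₀²) = e^{-η²ξ₀²/2}(φ₀ - ηξ₀²) and variance v(ξ₀²) = 1 - e^{-η²ξ₀²}(1+η²ξ₀²). Then E[Φ₁] = -Nη(η²+1)^{-N/2-1}. -/
open Real Set MeasureTheory

/-- Chi-squared density with `N` degrees of freedom. -/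
noncomputable def chiSqPDF (N : ℕ) (z : ℝ) : ℝ :=
  z ^ ((N : ℝ) / 2 - 1) * Real.exp (-z / 2) / (2 ^ ((N : ℝ) / 2) * Real.Gamma ((N : ℝ) / 2))

/-- Standard normal density. -/
noncomputable def stdNormalPDF (x : ℝ) : ℝ :=
  (2 * π) ^ (-(1 / 2 : ℝ)) * Real.exp (-x ^ 2 / 2)

/-- Conditional mean of `Φ₁` given `Φ₀ = φ₀` and `Ξ₀² = ξ`. -/
noncomputable def condMean (η φ₀ ξ : ℝ) : ℝ :=
  Real.exp (-η ^ 2 * ξ / 2) * (φ₀ - η * ξ)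

lemma gammaIntegrableOn {a r : ℝ} (ha : 0 < a) (hr : 0 < r) :
    MeasureTheory.IntegrableOn (fun t : ℝ => t ^ (a - 1) * Real.exp (-(r * t))) (Ioi 0) := by
  have := integrableOn_rpow_mul_exp_neg_mul_rpow (p := 1) (s := a - 1) (b := r)
    (by linarith) zero_lt_one hr
  refine this.congr_fun (fun t ht => ?_) measurableSet_Ioi
  simp only [Real.rpow_one, neg_mul]

lemma inner_eval (N : ℕ) (hN : 0 < N) (η : ℝ) (hη : 0 < η) (φ₀ : ℝ) :
    ∫ ξ in Ioi (0 : ℝ), condMean η φ₀ ξ * chiSqPDF N ξ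
      = φ₀ * (η ^ 2 + 1) ^ (-(N : ℝ) / 2)
        - η * N * (η ^ 2 + 1) ^ (-(N : ℝ) / 2 - 1) := by
  set a : ℝ := (N : ℝ) / 2 with ha_def
  have ha : 0 < a := by positivity
  set r : ℝ := (η ^ 2 + 1) / 2 with hr_def
  have hr : 0 < r := by positivity
  have hΓ : Real.Gamma a ≠ 0 := (Real.Gamma_pos_of_pos ha).ne'
  set c : ℝ := 2 ^ a * Real.Gamma a with hc_def
  have hc : c ≠ 0 := by positivity
  have h2a : (2:ℝ) ^ a ≠ 0 := by positivity
  have hb : (0:ℝ) < η ^ 2 + 1 := by positivity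
  have h2r : 2 * r = η ^ 2 + 1 := by rw [hr_def]; ring
  -- rewrite integrand
  have key : ∀ ξ ∈ Ioi (0 : ℝ),
      condMean η φ₀ ξ * chiSqPDF N ξ
        = (φ₀ * (ξ ^ (a - 1) * Real.exp (-(r * ξ)))
            - η * (ξ ^ (a + 1 - 1) * Real.exp (-(r * ξ)))) / c := by
    intro ξ hξ
    have hξ0 : (0 : ℝ) < ξ := hξ
    have hpow : ξ ^ (a + 1 - 1) = ξ ^ (a - 1) * ξ := by
      rw [show a + 1 - 1 = (a - 1) + 1 by ring, Real.rpow_add hξ0, Real.rpow_one]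
    have hexp : Real.exp (-η ^ 2 * ξ / 2) * Real.exp (-ξ / 2) = Real.exp (-(r * ξ)) := by
      rw [← Real.exp_add, hr_def]; ring_nf
    rw [condMean, chiSqPDF, hpow, ← hexp, hc_def, ha_def]
    field_simp
  rw [MeasureTheory.setIntegral_congr_fun measurableSet_Ioi key]
  have int1 := gammaIntegrableOn ha hr
  have int2 := gammaIntegrableOn (by linarith : (0:ℝ) < a + 1) hr
  have int1' : MeasureTheory.IntegrableOn
      (fun ξ : ℝ => φ₀ * (ξ ^ (a - 1) * Real.exp (-(r * ξ)))) (Ioi 0) := int1.const_mul _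
  have int2' : MeasureTheory.IntegrableOn
      (fun ξ : ℝ => η * (ξ ^ (a + 1 - 1) * Real.exp (-(r * ξ)))) (Ioi 0) := int2.const_mul _
  have split : (∫ ξ in Ioi (0 : ℝ),
      (φ₀ * (ξ ^ (a - 1) * Real.exp (-(r * ξ)))
        - η * (ξ ^ (a + 1 - 1) * Real.exp (-(r * ξ)))) / c)
      = ((φ₀ * ∫ ξ in Ioi (0 : ℝ), ξ ^ (a - 1) * Real.exp (-(r * ξ)))
        - η * ∫ ξ in Ioi (0 : ℝ), ξ ^ (a + 1 - 1) * Real.exp (-(r * ξ))) / c := by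
    simp_rw [div_eq_mul_inv]
    rw [MeasureTheory.integral_mul_const, MeasureTheory.integral_sub int1' int2',
      MeasureTheory.integral_const_mul, MeasureTheory.integral_const_mul]
  rw [split, Real.integral_rpow_mul_exp_neg_mul_Ioi ha hr,
    Real.integral_rpow_mul_exp_neg_mul_Ioi (by linarith : (0:ℝ) < a + 1) hr,
    Real.Gamma_add_one ha.ne']
  -- pure algebra with rpow
  have hpow : ∀ b : ℝ, (1 / r) ^ b / 2 ^ b = (η ^ 2 + 1) ^ (-b) := by
    intro b
    rw [← Real.div_rpow (by positivity) (by norm_num),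
      show (1 / r) / 2 = (η ^ 2 + 1)⁻¹ by rw [← h2r, mul_inv, one_div, div_eq_mul_inv, mul_comm],
      Real.inv_rpow hb.le, ← Real.rpow_neg hb.le]
  have e1 : (1 / r) ^ a * Real.Gamma a / c = (η ^ 2 + 1) ^ (-a) := by
    rw [← hpow a, hc_def]; field_simp
  have e2 : (1 / r) ^ (a + 1) * (a * Real.Gamma a) / c = 2 * a * (η ^ 2 + 1) ^ (-a - 1) := by
    rw [show (-a - 1 : ℝ) = -(a + 1) by ring, ← hpow (a + 1), hc_def,
      Real.rpow_add (by norm_num : (0:ℝ) < 2), Real.rpow_one]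
    field_simp
  rw [show -(N : ℝ) / 2 - 1 = -a - 1 by rw [ha_def]; ring,
    show -(N : ℝ) / 2 = -a by rw [ha_def]; ring,
    show ((N : ℝ)) = 2 * a by rw [ha_def]; ring]
  linear_combination φ₀ * e1 - η * e2

/-- With `Φ₀ ~ N(0,1)` and `Ξ₀² ~ χ²(N)` independent, and `Φ₁` conditionally
normal with mean `e^{-η²ξ/2}(φ₀ - ηξ)`, the expectation of `Φ₁` (i.e. of the
conditional mean) equals `-Nη(η²+1)^{-N/2-1}`. -/
theorem expected_field_after_one_step (N : ℕ) (hN : 0 < N) (η : ℝ) (hη : 0 < η) :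
    ∫ φ₀ : ℝ, stdNormalPDF φ₀ *
        ∫ ξ in Ioi (0 : ℝ), condMean η φ₀ ξ * chiSqPDF N ξ
      = -(N : ℝ) * η * (η ^ 2 + 1) ^ (-(N : ℝ) / 2 - 1) := by
  simp_rw [inner_eval N hN η hη]
  set A : ℝ := (η ^ 2 + 1) ^ (-(N : ℝ) / 2) with hA
  set C : ℝ := η * N * (η ^ 2 + 1) ^ (-(N : ℝ) / 2 - 1) with hC
  have k2π : (0:ℝ) < 2 * π := by positivity
  have h1 : MeasureTheory.Integrable (fun x : ℝ => Real.exp (-x ^ 2 / 2)) := by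
    simpa only [show ∀ x : ℝ, -(1/2 : ℝ) * x ^ 2 = -x ^ 2 / 2 from fun x => by ring]
      using integrable_exp_neg_mul_sq (show (0:ℝ) < 1/2 by norm_num)
  have h2 : MeasureTheory.Integrable (fun x : ℝ => x * Real.exp (-x ^ 2 / 2)) := by
    simpa only [show ∀ x : ℝ, -(1/2 : ℝ) * x ^ 2 = -x ^ 2 / 2 from fun x => by ring]
      using integrable_mul_exp_neg_mul_sq (show (0:ℝ) < 1/2 by norm_num)
  have hpdf : MeasureTheory.Integrable stdNormalPDF := by
    exact h1.const_mul ((2 * π) ^ (-(1 / 2 : ℝ)))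
  have hid : (fun x : ℝ => x * stdNormalPDF x)
      = fun x : ℝ => (2 * π) ^ (-(1 / 2 : ℝ)) * (x * Real.exp (-x ^ 2 / 2)) :=
    funext fun x => by simp only [stdNormalPDF]; ring
  have hxpdf : MeasureTheory.Integrable (fun x : ℝ => x * stdNormalPDF x) := by
    rw [hid]; exact h2.const_mul _
  have hzero : (∫ x : ℝ, x * Real.exp (-x ^ 2 / 2)) = 0 := by
    have h := MeasureTheory.integral_neg_eq_self
      (fun x : ℝ => x * Real.exp (-x ^ 2 / 2)) MeasureTheory.volume
    have h' : (∫ x : ℝ, -(x * Real.exp (-x ^ 2 / 2)))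
        = ∫ x : ℝ, x * Real.exp (-x ^ 2 / 2) := by
      simpa only [show ∀ x : ℝ, (-x) * Real.exp (-(-x) ^ 2 / 2)
          = -(x * Real.exp (-x ^ 2 / 2)) from fun x => by rw [neg_sq]; ring] using h
    rw [MeasureTheory.integral_neg] at h'
    linarith
  have hnorm : (∫ x : ℝ, stdNormalPDF x) = 1 := by
    simp only [stdNormalPDF]
    rw [MeasureTheory.integral_const_mul]
    have : (∫ x : ℝ, Real.exp (-x ^ 2 / 2)) = Real.sqrt (2 * π) := by
      rw [show Real.sqrt (2 * π) = Real.sqrt (π / (1/2)) by rw [show π / (1/2:ℝ) = 2 * π by ring],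
        ← integral_gaussian (1/2)]
      exact congrArg _ (funext fun x => by ring_nf)
    rw [this, Real.sqrt_eq_rpow, ← Real.rpow_add k2π]
    norm_num
  have hexpand : ∀ x : ℝ, stdNormalPDF x * (x * A - C)
      = A * (x * stdNormalPDF x) - C * stdNormalPDF x := fun x => by ring
  simp only [hexpand]
  rw [MeasureTheory.integral_sub (hxpdf.const_mul A) (hpdf.const_mul C),
    MeasureTheory.integral_const_mul, MeasureTheory.integral_const_mul, hnorm,
    hid, MeasureTheory.integral_const_mul, hzero]
  rw [hC]; ring
end

section
/- With the same setup (Φ₀ ~ N(0,1), Ξ₀² ~ χ²(N) independent, Φ₁ conditionally normal with mean e^{-η²ξ₀²/2}(φ₀ - ηξ₀²) and variance 1 - e^{-η²ξ₀²}(1+η²ξ₀²)), the variance of Φ₁ equals 1 + Nη²(1+2η²)^{-N/2-2}(N + 1 - 2η²) - N²η²(η²+1)^{-N-2}. -/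
open Real Set

/-- Conditional variance of `Φ₁` given `Ξ₀² = ξ`. -/
noncomputable def condVar (η ξ : ℝ) : ℝ :=
  1 - Real.exp (-η ^ 2 * ξ) * (1 + η ^ 2 * ξ)


open MeasureTheory

lemma chi_integrable (N : ℕ) (hN : 0 < N) (k : ℕ) (s : ℝ) (hs : 0 ≤ s) :
    IntegrableOn (fun ξ => ξ ^ k * Real.exp (-(s * ξ)) * chiSqPDF N ξ) (Ioi (0:ℝ)) := by
  have hp : (0:ℝ) < (N:ℝ)/2 := by positivity
  have h : IntegrableOn (fun ξ : ℝ => ξ ^ ((N:ℝ)/2 + k - 1) * Real.exp (-(s + 1/2) * ξ ^ (1:ℝ)))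
      (Ioi (0:ℝ)) := by
    refine integrableOn_rpow_mul_exp_neg_mul_rpow ?_ one_pos (by linarith)
    have : (0:ℝ) ≤ (k:ℝ) := Nat.cast_nonneg k
    linarith
  have h2 := h.const_mul ((2 ^ ((N : ℝ) / 2) * Real.Gamma ((N : ℝ) / 2))⁻¹)
  refine (IntegrableOn.congr_fun h2 (fun ξ hξ => ?_) measurableSet_Ioi)
  have hξ : (0:ℝ) < ξ := hξ
  unfold chiSqPDF
  rw [rpow_one, show (N:ℝ)/2 + k - 1 = (k:ℝ) + ((N:ℝ)/2 - 1) by ring, rpow_add hξ,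
    rpow_natCast]
  rw [show -(s+1/2)*ξ = -(s*ξ) + (-ξ/2) by ring, Real.exp_add]
  field_simp

lemma chi_int (N : ℕ) (hN : 0 < N) (k : ℕ) (s : ℝ) (hs : 0 ≤ s) :
    ∫ ξ in Ioi (0:ℝ), ξ ^ k * Real.exp (-(s * ξ)) * chiSqPDF N ξ
      = Real.Gamma ((N:ℝ)/2 + k) / Real.Gamma ((N:ℝ)/2)
          * (2*s+1) ^ (-((N:ℝ)/2 + k)) * 2 ^ k := by
  have hp : (0:ℝ) < (N:ℝ)/2 := by positivity
  have hpk : (0:ℝ) < (N:ℝ)/2 + k := by positivity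
  have hr : (0:ℝ) < s + 1/2 := by linarith
  have key := integral_rpow_mul_exp_neg_mul_Ioi hpk hr
  have congr1 : ∫ ξ in Ioi (0:ℝ), ξ ^ k * Real.exp (-(s * ξ)) * chiSqPDF N ξ
      = ∫ ξ in Ioi (0:ℝ),
          (2 ^ ((N : ℝ) / 2) * Real.Gamma ((N : ℝ) / 2))⁻¹
            * (ξ ^ ((N:ℝ)/2 + k - 1) * Real.exp (-((s + 1/2) * ξ))) := by
    refine setIntegral_congr_fun measurableSet_Ioi (fun ξ hξ => ?_)
    have hξ : (0:ℝ) < ξ := hξ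
    unfold chiSqPDF
    rw [show (N:ℝ)/2 + k - 1 = (k:ℝ) + ((N:ℝ)/2 - 1) by ring, rpow_add hξ, rpow_natCast,
      show -((s+1/2)*ξ) = -(s*ξ) + (-ξ/2) by ring, Real.exp_add]
    field_simp
  rw [congr1, MeasureTheory.integral_const_mul, key]
  have hb : (0:ℝ) < 2*s+1 := by linarith
  have hg : (0:ℝ) < Real.Gamma ((N:ℝ)/2) := Real.Gamma_pos_of_pos hp
  have h2 : ((1:ℝ)/(s+1/2)) ^ ((N:ℝ)/2 + k)
      = 2 ^ ((N:ℝ)/2) * 2 ^ (k:ℕ) * (2*s+1) ^ (-((N:ℝ)/2 + k)) := by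
    rw [show (1:ℝ)/(s+1/2) = 2/(2*s+1) by field_simp,
      Real.div_rpow (by norm_num) hb.le, Real.rpow_add two_pos, Real.rpow_natCast,
      Real.rpow_neg hb.le]
    field_simp
  rw [h2]
  have h2p : (0:ℝ) < (2:ℝ) ^ ((N:ℝ)/2) := by positivity
  field_simp

lemma gauss_integrable (k : ℕ) : Integrable (fun x : ℝ => x ^ k * stdNormalPDF x) := by
  have h := (integrable_rpow_mul_exp_neg_mul_sq (by norm_num : (0:ℝ) < 1/2)
    (by { have := Nat.cast_nonneg (α := ℝ) k; linarith } : (-1:ℝ) < k)).const_mul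
      ((2 * π) ^ (-(1 / 2 : ℝ)))
  refine h.congr (Filter.Eventually.of_forall fun x => ?_)
  unfold stdNormalPDF
  dsimp only
  rw [Real.rpow_natCast, show -(1/2:ℝ)*x^2 = -x^2/2 by ring]
  ring

lemma gauss0 : ∫ x : ℝ, stdNormalPDF x = 1 := by
  unfold stdNormalPDF
  rw [MeasureTheory.integral_const_mul]
  have : ∫ x : ℝ, Real.exp (-x ^ 2 / 2) = ∫ x : ℝ, Real.exp (-(1/2) * x ^ 2) := by
    congr 1; funext x; ring_nf
  rw [this, integral_gaussian]
  rw [show π / (1/2) = 2 * π by ring, Real.sqrt_eq_rpow, ← Real.rpow_add (by positivity)]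
  norm_num

lemma gauss1 : ∫ x : ℝ, x * stdNormalPDF x = 0 := by
  have hint := gauss_integrable 1
  simp only [pow_one] at hint
  have h1 : IntegrableOn (fun x : ℝ => x * stdNormalPDF x) (Iic 0) := hint.integrableOn
  have h2 : IntegrableOn (fun x : ℝ => x * stdNormalPDF x) (Ioi 0) := hint.integrableOn
  have split : ∫ x : ℝ, x * stdNormalPDF x
      = (∫ x in Iic (0:ℝ), x * stdNormalPDF x) + ∫ x in Ioi (0:ℝ), x * stdNormalPDF x := by
    rw [← MeasureTheory.setIntegral_union (Iic_disjoint_Ioi le_rfl) measurableSet_Ioi h1 h2,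
      Iic_union_Ioi, MeasureTheory.Measure.restrict_univ]
  have neg : ∫ x in Iic (0:ℝ), x * stdNormalPDF x
      = - ∫ x in Ioi (0:ℝ), x * stdNormalPDF x := by
    have := integral_comp_neg_Iic (0:ℝ) (fun x => x * stdNormalPDF x)
    rw [neg_zero] at this
    rw [← this, ← MeasureTheory.integral_neg]
    refine setIntegral_congr_fun measurableSet_Iic (fun x _ => ?_)
    unfold stdNormalPDF
    ring_nf
  rw [split, neg]; ring

lemma gauss2 : ∫ x : ℝ, x ^ 2 * stdNormalPDF x = 1 := by
  unfold stdNormalPDF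
  have habs : ∫ x : ℝ, x ^ 2 * ((2 * π) ^ (-(1 / 2 : ℝ)) * Real.exp (-x ^ 2 / 2))
      = 2 * ∫ x in Ioi (0:ℝ), x ^ 2 * ((2 * π) ^ (-(1 / 2 : ℝ)) * Real.exp (-x ^ 2 / 2)) := by
    rw [← integral_comp_abs (f := fun x => x ^ 2 * ((2 * π) ^ (-(1 / 2 : ℝ)) * Real.exp (-x ^ 2 / 2)))]
    congr 1; funext x
    rw [sq_abs]
  rw [habs]
  have key : ∫ x in Ioi (0:ℝ), x ^ (2:ℝ) * Real.exp (-(1/2) * x ^ (2:ℝ))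
      = ((1:ℝ)/2) ^ (-((2:ℝ)+1)/2) * (1/2) * Real.Gamma (((2:ℝ)+1)/2) :=
    integral_rpow_mul_exp_neg_mul_rpow two_pos (by norm_num) (by norm_num)
  have congr1 : ∫ x in Ioi (0:ℝ), x ^ 2 * ((2 * π) ^ (-(1 / 2 : ℝ)) * Real.exp (-x ^ 2 / 2))
      = (2 * π) ^ (-(1 / 2 : ℝ)) * ∫ x in Ioi (0:ℝ), x ^ (2:ℝ) * Real.exp (-(1/2) * x ^ (2:ℝ)) := by
    rw [← MeasureTheory.integral_const_mul]
    refine setIntegral_congr_fun measurableSet_Ioi (fun x _ => ?_)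
    rw [Real.rpow_two]
    ring_nf
  rw [congr1, key]
  have hg : Real.Gamma (((2:ℝ)+1)/2) = Real.sqrt π / 2 := by
    rw [show ((2:ℝ)+1)/2 = 1/2 + 1 by norm_num, Real.Gamma_add_one (by norm_num),
      Real.Gamma_one_half_eq]
    ring
  rw [hg]
  rw [show ((1:ℝ)/2) ^ (-((2:ℝ)+1)/2) = 2 ^ ((3:ℝ)/2) by
    rw [show (1:ℝ)/2 = 2 ^ (-1:ℝ) by rw [Real.rpow_neg_one]; norm_num,
      ← Real.rpow_mul (by norm_num : (0:ℝ) ≤ 2)]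
    norm_num]
  rw [Real.rpow_neg (by positivity), Real.mul_rpow (by norm_num) pi_pos.le,
    show (3:ℝ)/2 = 1/2 + 1 by norm_num, Real.rpow_add two_pos, Real.rpow_one,
    Real.sqrt_eq_rpow]
  have ha : (0:ℝ) < (2:ℝ) ^ ((1:ℝ)/2) := by positivity
  have hb : (0:ℝ) < π ^ ((1:ℝ)/2) := by positivity
  field_simp

lemma Gamma_ratio1 (p : ℝ) (hp : 0 < p) : Real.Gamma (p + 1) / Real.Gamma p = p := by
  rw [Real.Gamma_add_one hp.ne']
  field_simp [ (Real.Gamma_pos_of_pos hp).ne' ]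

lemma Gamma_ratio2 (p : ℝ) (hp : 0 < p) :
    Real.Gamma (p + 2) / Real.Gamma p = p * (p + 1) := by
  rw [show p + 2 = (p + 1) + 1 by ring, Real.Gamma_add_one (by positivity),
    Real.Gamma_add_one hp.ne']
  field_simp [ (Real.Gamma_pos_of_pos hp).ne' ]

lemma inner_mean (N : ℕ) (hN : 0 < N) (η : ℝ) (hη : 0 < η) (φ₀ : ℝ) :
    ∫ ξ in Ioi (0:ℝ), condMean η φ₀ ξ * chiSqPDF N ξ
      = φ₀ * (η^2+1) ^ (-(N:ℝ)/2) - (N:ℝ) * η * (η^2+1) ^ (-(N:ℝ)/2 - 1) := by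
  have hp : (0:ℝ) < (N:ℝ)/2 := by positivity
  have hs : (0:ℝ) ≤ η^2/2 := by positivity
  have h0 := chi_integrable N hN 0 (η^2/2) hs
  have h1 := chi_integrable N hN 1 (η^2/2) hs
  have congr1 : ∫ ξ in Ioi (0:ℝ), condMean η φ₀ ξ * chiSqPDF N ξ
      = ∫ ξ in Ioi (0:ℝ), (φ₀ * (ξ^0 * Real.exp (-(η^2/2 * ξ)) * chiSqPDF N ξ)
          + (-η) * (ξ^1 * Real.exp (-(η^2/2 * ξ)) * chiSqPDF N ξ)) := by
    refine setIntegral_congr_fun measurableSet_Ioi (fun ξ _ => ?_)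
    unfold condMean
    rw [show -η^2*ξ/2 = -(η^2/2*ξ) by ring]
    ring
  rw [congr1, MeasureTheory.integral_add (h0.const_mul _) (h1.const_mul _),
    MeasureTheory.integral_const_mul, MeasureTheory.integral_const_mul,
    chi_int N hN 0 _ hs, chi_int N hN 1 _ hs]
  have e1 : (2*(η^2/2)+1 : ℝ) = η^2 + 1 := by ring
  rw [e1]
  push_cast
  rw [add_zero, Real.Gamma_add_one hp.ne']
  have hg := (Real.Gamma_pos_of_pos hp).ne'
  have e2 : (-((N:ℝ)/2 + 1)) = -(N:ℝ)/2 - 1 := by ring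
  have e3 : (-((N:ℝ)/2)) = -(N:ℝ)/2 := by ring
  rw [e2, e3]
  field_simp
  ring

lemma inner_second (N : ℕ) (hN : 0 < N) (η : ℝ) (hη : 0 < η) (φ₀ : ℝ) :
    ∫ ξ in Ioi (0:ℝ), (condVar η ξ + condMean η φ₀ ξ ^ 2) * chiSqPDF N ξ
      = 1 + (φ₀^2 - 1) * (1+2*η^2) ^ (-(N:ℝ)/2)
          + (-η^2 - 2*η*φ₀) * ((N:ℝ) * (1+2*η^2) ^ (-(N:ℝ)/2 - 1))
          + η^2 * ((N:ℝ) * ((N:ℝ)+2) * (1+2*η^2) ^ (-(N:ℝ)/2 - 2)) := by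
  have hp : (0:ℝ) < (N:ℝ)/2 := by positivity
  have hs : (0:ℝ) ≤ η^2 := by positivity
  have h00 := chi_integrable N hN 0 0 le_rfl
  have h0 := chi_integrable N hN 0 (η^2) hs
  have h1 := chi_integrable N hN 1 (η^2) hs
  have h2 := chi_integrable N hN 2 (η^2) hs
  have congr1 : ∫ ξ in Ioi (0:ℝ), (condVar η ξ + condMean η φ₀ ξ ^ 2) * chiSqPDF N ξ
      = ∫ ξ in Ioi (0:ℝ),
          ((1:ℝ) * (ξ^0 * Real.exp (-((0:ℝ) * ξ)) * chiSqPDF N ξ)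
            + (φ₀^2 - 1) * (ξ^0 * Real.exp (-(η^2 * ξ)) * chiSqPDF N ξ)
            + (-η^2 - 2*η*φ₀) * (ξ^1 * Real.exp (-(η^2 * ξ)) * chiSqPDF N ξ)
            + η^2 * (ξ^2 * Real.exp (-(η^2 * ξ)) * chiSqPDF N ξ)) := by
    refine setIntegral_congr_fun measurableSet_Ioi (fun ξ _ => ?_)
    unfold condVar condMean
    have e0 : Real.exp (-((0:ℝ) * ξ)) = 1 := by norm_num
    have eA : Real.exp (-η^2*ξ) = Real.exp (-(η^2*ξ)) := by rw [neg_mul]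
    have eB : Real.exp (-η ^ 2 * ξ / 2) ^ 2 = Real.exp (-(η^2*ξ)) := by
      rw [sq, ← Real.exp_add]
      congr 1
      ring
    rw [mul_pow, e0, eA, eB]
    ring
  have hA : Integrable (fun ξ : ℝ => (1:ℝ) * (ξ^0 * Real.exp (-((0:ℝ) * ξ)) * chiSqPDF N ξ)
      + (φ₀^2 - 1) * (ξ^0 * Real.exp (-(η^2 * ξ)) * chiSqPDF N ξ))
      (volume.restrict (Ioi 0)) := (h00.const_mul _).add (h0.const_mul _)
  have hB : Integrable (fun ξ : ℝ => ((1:ℝ) * (ξ^0 * Real.exp (-((0:ℝ) * ξ)) * chiSqPDF N ξ)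
      + (φ₀^2 - 1) * (ξ^0 * Real.exp (-(η^2 * ξ)) * chiSqPDF N ξ))
      + (-η^2 - 2*η*φ₀) * (ξ^1 * Real.exp (-(η^2 * ξ)) * chiSqPDF N ξ))
      (volume.restrict (Ioi 0)) := hA.add (h1.const_mul _)
  rw [congr1,
    MeasureTheory.integral_add hB (h2.const_mul _),
    MeasureTheory.integral_add hA (h1.const_mul _),
    MeasureTheory.integral_add (h00.const_mul _) (h0.const_mul _),
    MeasureTheory.integral_const_mul, MeasureTheory.integral_const_mul,
    MeasureTheory.integral_const_mul, MeasureTheory.integral_const_mul,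
    chi_int N hN 0 0 le_rfl, chi_int N hN 0 _ hs, chi_int N hN 1 _ hs, chi_int N hN 2 _ hs]
  push_cast
  rw [add_zero]
  have hg := (Real.Gamma_pos_of_pos hp).ne'
  have r1 := Gamma_ratio1 ((N:ℝ)/2) hp
  have r2 := Gamma_ratio2 ((N:ℝ)/2) hp
  rw [r1, r2]
  have e1 : (2*(0:ℝ)+1 : ℝ) = 1 := by norm_num
  have e2 : (2*η^2+1 : ℝ) = 1 + 2*η^2 := by ring
  rw [e1, e2, Real.one_rpow, div_self hg]
  have e3 : (-((N:ℝ)/2 + 1)) = -(N:ℝ)/2 - 1 := by ring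
  have e4 : (-((N:ℝ)/2 + 2)) = -(N:ℝ)/2 - 2 := by ring
  have e5 : (-((N:ℝ)/2)) = -(N:ℝ)/2 := by ring
  rw [e3, e4, e5]
  norm_num
  ring

lemma outer (c0 c1 c2 : ℝ) :
    ∫ x : ℝ, stdNormalPDF x * (c0 + c1 * x + c2 * x ^ 2) = c0 + c2 := by
  have g0 := gauss_integrable 0
  have g1 := gauss_integrable 1
  have g2 := gauss_integrable 2
  have hA : Integrable (fun x : ℝ => c0 * (x ^ 0 * stdNormalPDF x)
      + c1 * (x ^ 1 * stdNormalPDF x)) := (g0.const_mul _).add (g1.const_mul _)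
  have congr1 : ∫ x : ℝ, stdNormalPDF x * (c0 + c1 * x + c2 * x ^ 2)
      = ∫ x : ℝ, (c0 * (x ^ 0 * stdNormalPDF x) + c1 * (x ^ 1 * stdNormalPDF x)
          + c2 * (x ^ 2 * stdNormalPDF x)) := by
    congr 1; funext x; ring
  rw [congr1, MeasureTheory.integral_add hA (g2.const_mul _),
    MeasureTheory.integral_add (g0.const_mul _) (g1.const_mul _),
    MeasureTheory.integral_const_mul, MeasureTheory.integral_const_mul,
    MeasureTheory.integral_const_mul]
  have e0 : ∫ x : ℝ, x ^ 0 * stdNormalPDF x = 1 := by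
    rw [← gauss0]; congr 1; funext x; ring
  have e1 : ∫ x : ℝ, x ^ 1 * stdNormalPDF x = 0 := by
    rw [← gauss1]; congr 1; funext x; ring
  rw [e0, e1, gauss2]
  ring

/-- With `Φ₀ ~ N(0,1)` and `Ξ₀² ~ χ²(N)` independent, and `Φ₁` conditionally
normal with mean `condMean` and variance `condVar`, the variance of `Φ₁`,
computed as `E[Φ₁²] - E[Φ₁]² = E[condVar + condMean²] - E[condMean]²`, equals
`1 + Nη²(1+2η²)^{-N/2-2}(N+1-2η²) - N²η²(η²+1)^{-N-2}`. -/
theorem variance_field_after_one_step (N : ℕ) (hN : 0 < N) (η : ℝ) (hη : 0 < η) :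
    (∫ φ₀ : ℝ, stdNormalPDF φ₀ *
        ∫ ξ in Ioi (0 : ℝ), (condVar η ξ + condMean η φ₀ ξ ^ 2) * chiSqPDF N ξ)
      - (∫ φ₀ : ℝ, stdNormalPDF φ₀ *
          ∫ ξ in Ioi (0 : ℝ), condMean η φ₀ ξ * chiSqPDF N ξ) ^ 2
      = 1 + (N : ℝ) * η ^ 2 * (1 + 2 * η ^ 2) ^ (-(N : ℝ) / 2 - 2)
              * ((N : ℝ) + 1 - 2 * η ^ 2)
          - (N : ℝ) ^ 2 * η ^ 2 * (η ^ 2 + 1) ^ (-(N : ℝ) - 2) := by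
  set b : ℝ := 1 + 2*η^2 with hbdef
  set a : ℝ := η^2 + 1 with hadef
  have hb : (0:ℝ) < b := by rw [hbdef]; positivity
  have ha : (0:ℝ) < a := by rw [hadef]; positivity
  have B0 : ℝ := b ^ (-(N:ℝ)/2)
  have first : ∫ φ₀ : ℝ, stdNormalPDF φ₀ *
        ∫ ξ in Ioi (0 : ℝ), (condVar η ξ + condMean η φ₀ ξ ^ 2) * chiSqPDF N ξ
      = (1 - b ^ (-(N:ℝ)/2) - η^2 * ((N:ℝ) * b ^ (-(N:ℝ)/2 - 1))
          + η^2 * ((N:ℝ) * ((N:ℝ)+2) * b ^ (-(N:ℝ)/2 - 2))) + b ^ (-(N:ℝ)/2) := by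
    rw [show (∫ φ₀ : ℝ, stdNormalPDF φ₀ *
        ∫ ξ in Ioi (0 : ℝ), (condVar η ξ + condMean η φ₀ ξ ^ 2) * chiSqPDF N ξ)
      = ∫ φ₀ : ℝ, stdNormalPDF φ₀ *
          ((1 - b ^ (-(N:ℝ)/2) - η^2 * ((N:ℝ) * b ^ (-(N:ℝ)/2 - 1))
            + η^2 * ((N:ℝ) * ((N:ℝ)+2) * b ^ (-(N:ℝ)/2 - 2)))
           + (-2*η*((N:ℝ) * b ^ (-(N:ℝ)/2 - 1))) * φ₀
           + (b ^ (-(N:ℝ)/2)) * φ₀ ^ 2) from ?_, outer]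
    congr 1; funext φ₀
    rw [inner_second N hN η hη φ₀]
    ring
  have second : ∫ φ₀ : ℝ, stdNormalPDF φ₀ *
        ∫ ξ in Ioi (0 : ℝ), condMean η φ₀ ξ * chiSqPDF N ξ
      = (-((N:ℝ) * η * a ^ (-(N:ℝ)/2 - 1))) + 0 := by
    rw [show (∫ φ₀ : ℝ, stdNormalPDF φ₀ *
        ∫ ξ in Ioi (0 : ℝ), condMean η φ₀ ξ * chiSqPDF N ξ)
      = ∫ φ₀ : ℝ, stdNormalPDF φ₀ *
          ((-((N:ℝ) * η * a ^ (-(N:ℝ)/2 - 1))) + (a ^ (-(N:ℝ)/2)) * φ₀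
            + (0:ℝ) * φ₀ ^ 2) from ?_, outer]
    congr 1; funext φ₀
    rw [inner_mean N hN η hη φ₀]
    ring
  rw [first, second]
  have eb : b ^ (-(N:ℝ)/2 - 1) = b ^ (-(N:ℝ)/2 - 2) * b := by
    rw [show -(N:ℝ)/2 - 1 = (-(N:ℝ)/2 - 2) + 1 by ring, Real.rpow_add hb, Real.rpow_one]
  have ea : (a ^ (-(N:ℝ)/2 - 1)) ^ 2 = a ^ (-(N:ℝ) - 2) := by
    rw [← Real.rpow_natCast (a ^ (-(N:ℝ)/2 - 1)) 2, ← Real.rpow_mul ha.le]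
    congr 1
    push_cast
    ring
  rw [eb]
  rw [show ((-((N:ℝ) * η * a ^ (-(N:ℝ)/2 - 1))) + 0) ^ 2
      = (N:ℝ)^2 * η^2 * (a ^ (-(N:ℝ)/2 - 1)) ^ 2 by ring, ea]
  rw [hbdef]
  ring
end
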